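/- Let T : V → g be an O-operator on a Lie algebra g with respect to a representation (V;ρ), and let x ∈ g be a Nijenhuis element, i.e. (1) [[x,y],[x,z]] = 0 for all y,z ∈ g, (2) ρ([x,y])∘ρ(x) = 0 for all y ∈ g, and (3) [x, [Tu,x] + T(ρ(x)u)] = 0 for all u ∈ V. Define Ť(u) := T(ρ(x)u) + [Tu, x]. Then for all u,v ∈ V, [Ťu, Ťv] = Ť(ρ(Ťu)v − ρ(Ťv)u), i.e. Ť is itself an O-operator. -/

import Mathlib

attribute [local instance 100] LieRing.ofAssociativeRing

/-- For a Nijenhuis element `x` associated to an O-operator `T`, the map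
`Ť(u) := T(ρ(x)u) + [Tu,x]` is itself an O-operator. -/
theorem stmt8 {K : Type*} [Field K]
    {g : Type*} [LieRing g] [LieAlgebra K g]
    {V : Type*} [AddCommGroup V] [Module K V]
    (ρ : g →ₗ⁅K⁆ Module.End K V) (T : V →ₗ[K] g) (x : g)
    (hT : ∀ u v : V, ⁅T u, T v⁆ = T (ρ (T u) v - ρ (T v) u))
    (h1 : ∀ y z : g, ⁅⁅x, y⁆, ⁅x, z⁆⁆ = 0)
    (h2 : ∀ y : g, ∀ u : V, ρ ⁅x, y⁆ (ρ x u) = 0)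
    (h3 : ∀ u : V, ⁅x, ⁅T u, x⁆ + T (ρ x u)⁆ = 0) :
    ∀ u v : V,
      ⁅T (ρ x u) + ⁅T u, x⁆, T (ρ x v) + ⁅T v, x⁆⁆
        = T (ρ x (ρ (T (ρ x u) + ⁅T u, x⁆) v - ρ (T (ρ x v) + ⁅T v, x⁆) u))
          + ⁅T (ρ (T (ρ x u) + ⁅T u, x⁆) v - ρ (T (ρ x v) + ⁅T v, x⁆) u), x⁆ := by
  -- representation identity: ρ⁅a,b⁆ w = ρa (ρb w) - ρb (ρa w)
  have hrep : ∀ (a b : g) (w : V), ρ ⁅a, b⁆ w = ρ a (ρ b w) - ρ b (ρ a w) := by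
    intro a b w
    rw [LieHom.map_lie, Ring.lie_def]
    simp [Module.End.mul_apply]
  -- commutation from h2
  have hc : ∀ (y : g) (w : V), ρ x (ρ y (ρ x w)) = ρ y (ρ x (ρ x w)) := by
    intro y w
    have h := h2 y w
    rw [hrep] at h
    exact sub_eq_zero.mp h
  have hz : ∀ (y : g) (w : V), ρ ⁅y, x⁆ (ρ x w) = 0 := by
    intro y w
    rw [← lie_skew y x, map_neg, LinearMap.neg_apply, h2, neg_zero]
  -- h1 variant
  have hRR : ∀ u v : V, ⁅⁅T u, x⁆, ⁅T v, x⁆⁆ = 0 := by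
    intro u v
    rw [← lie_skew (T u) x, ← lie_skew (T v) x, neg_lie, lie_neg, neg_neg, h1]
  -- h3 variants
  have hneg : ∀ u : V, ⁅x, T (ρ x u)⁆ = -⁅x, ⁅T u, x⁆⁆ := by
    intro u
    have h := h3 u
    rw [lie_add] at h
    exact eq_neg_of_add_eq_zero_right h
  have hSxg : ∀ u : V, ⁅T (ρ x u), x⁆ = ⁅x, ⁅T u, x⁆⁆ := by
    intro u
    rw [← lie_skew (T (ρ x u)) x, hneg, neg_neg]
  -- (a) ρ⁅Tu,x⁆ expansion
  have hRv : ∀ (u : V) (w : V), ρ ⁅T u, x⁆ w = ρ (T u) (ρ x w) - ρ x (ρ (T u) w) :=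
    fun u w => hrep (T u) x w
  -- (b) ρ⁅x,⁅Tu,x⁆⁆ expansion
  have hxR : ∀ (u : V) (w : V), ρ ⁅x, ⁅T u, x⁆⁆ w
      = ρ (T u) (ρ x (ρ x w)) - ρ x (ρ x (ρ (T u) w)) := by
    intro u w
    rw [hrep, hz (T u) w, sub_zero, hRv, map_sub, hc (T u) w]
  -- (c) move ρx past ρ(Su)
  have hSx : ∀ (u : V) (w : V), ρ (T (ρ x u)) (ρ x w)
      = ρ x (ρ (T (ρ x u)) w) + ρ ⁅x, ⁅T u, x⁆⁆ w := by
    intro u w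
    have h := hrep x (T (ρ x u)) w
    rw [hneg u, map_neg, LinearMap.neg_apply] at h
    linear_combination (norm := abel) h
  intro u v
  -- cross term 1
  have e2 : ⁅T (ρ x u), ⁅T v, x⁆⁆
      = ⁅T (ρ (T (ρ x u)) v), x⁆ - ⁅T (ρ (T v) (ρ x u)), x⁆ + ⁅x, ⁅T v, ⁅T u, x⁆⁆⁆ := by
    rw [leibniz_lie, hT (ρ x u) v, hSxg u, map_sub, sub_lie,
      leibniz_lie (T v) x, hRR v u, zero_add]
  -- cross term 2
  have e3 : ⁅⁅T u, x⁆, T (ρ x v)⁆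
      = -(⁅T (ρ (T (ρ x v)) u), x⁆ - ⁅T (ρ (T u) (ρ x v)), x⁆ + ⁅x, ⁅T u, ⁅T v, x⁆⁆⁆) := by
    rw [← lie_skew ⁅T u, x⁆ (T (ρ x v)), leibniz_lie, hT (ρ x v) u, hSxg v, map_sub, sub_lie,
      leibniz_lie (T u) x, hRR u v, zero_add]
  -- rearrange the double-bracket terms
  have e5 : ⁅x, ⁅T v, ⁅T u, x⁆⁆⁆
      = ⁅x, ⁅T u, ⁅T v, x⁆⁆⁆ - ⁅T (ρ x (ρ (T u) v - ρ (T v) u)), x⁆ := by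
    have hTvTu : ⁅T v, T u⁆ = -(T (ρ (T u) v - ρ (T v) u)) := by
      rw [← lie_skew, hT u v]
    rw [leibniz_lie (T v) (T u) x, hTvTu, neg_lie, lie_add, lie_neg,
      ← hneg (ρ (T u) v - ρ (T v) u), ← lie_skew (T (ρ x (ρ (T u) v - ρ (T v) u))) x]
    abel
  -- diagonal term
  have e1 : ⁅T (ρ x u), T (ρ x v)⁆
      = T (ρ x (ρ (T (ρ x u)) v)) + T (ρ ⁅x, ⁅T u, x⁆⁆ v)
        - T (ρ x (ρ (T (ρ x v)) u)) - T (ρ ⁅x, ⁅T v, x⁆⁆ u) := by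
    rw [hT (ρ x u) (ρ x v), hSx u v, hSx v u, map_sub, map_add, map_add]
    abel
  -- expand everything and finish
  rw [lie_add, add_lie, add_lie, hRR u v, e1, e2, e3, e5]
  simp only [map_add, map_sub, LinearMap.add_apply, LinearMap.sub_apply,
    hRv, hxR, hc, lie_add, add_lie, lie_sub, sub_lie]
  abel
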